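/- Let x̄ be optimal for the basis pursuit problem min ‖x‖₁ s.t. Ax = Ax̄. Then x̄ is optimal for (P_δ) with measurement vector b̂ if and only if there exists ȳ with −Aᵀȳ ∈ Sign(x̄) and b̂ ∈ Ax̄ − δ·Sign(ȳ). -/

import Mathlib

open Finset Pointwise

noncomputable def l1 {n : ℕ} (x : Fin n → ℝ) : ℝ := ∑ j, |x j|

noncomputable def linf {m : ℕ} (x : Fin m → ℝ) : ℝ := ⨆ i, |x i|

def SignSet {n : ℕ} (x : Fin n → ℝ) : Set (Fin n → ℝ) :=
  {ξ | (∀ j, |ξ j| ≤ 1) ∧ ∀ j, x j ≠ 0 → ξ j = Real.sign (x j)}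

def Feas {m n : ℕ} (A : Matrix (Fin m) (Fin n) ℝ) (b : Fin m → ℝ) (δ : ℝ)
    (x : Fin n → ℝ) : Prop := linf (A.mulVec x - b) ≤ δ

def IsOpt {m n : ℕ} (A : Matrix (Fin m) (Fin n) ℝ) (b : Fin m → ℝ) (δ : ℝ)
    (x : Fin n → ℝ) : Prop := Feas A b δ x ∧ ∀ z, Feas A b δ z → l1 x ≤ l1 z

def DualCert {m n : ℕ} (A : Matrix (Fin m) (Fin n) ℝ) (b : Fin m → ℝ) (δ : ℝ)
    (x : Fin n → ℝ) (y : Fin m → ℝ) : Prop :=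
  (-(A.transpose.mulVec y) ∈ SignSet x) ∧ (A.mulVec x - b ∈ δ • SignSet y)




section Farkas
variable {α : Type*} [Fintype α]

def dot (x y : α → ℝ) : ℝ := ∑ a, x a * y a

lemma dot_smul_left (a : ℝ) (x y : α → ℝ) : dot (a • x) y = a * dot x y := by
  simp [dot, Finset.mul_sum, mul_assoc]

lemma dot_sub_left (x y z : α → ℝ) : dot (x - y) z = dot x z - dot y z := by
  simp [dot, sub_mul, Finset.sum_sub_distrib]

lemma dot_smul_right (a : ℝ) (x y : α → ℝ) : dot x (a • y) = a * dot x y := by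
  simp [dot, Finset.mul_sum, mul_left_comm]

lemma dot_sub_right (x y z : α → ℝ) : dot x (y - z) = dot x y - dot x z := by
  simp [dot, mul_sub, Finset.sum_sub_distrib]

lemma dot_self_pos {x : α → ℝ} (h : x ≠ 0) : 0 < dot x x := by
  have hx : ∃ a, x a ≠ 0 := by
    by_contra hc; push_neg at hc; exact h (funext hc)
  obtain ⟨a, ha⟩ := hx
  exact Finset.sum_pos' (fun i _ => mul_self_nonneg _)
    ⟨a, Finset.mem_univ a, mul_self_pos.mpr ha⟩

theorem farkas (k : ℕ) : ∀ (v : Fin k → (α → ℝ)) (c : α → ℝ),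
    (∃ t : Fin k → ℝ, (∀ i, 0 ≤ t i) ∧ c = ∑ i, t i • v i) ∨
    (∃ d : α → ℝ, (∀ i, 0 ≤ dot (v i) d) ∧ dot c d < 0) := by
  induction k with
  | zero =>
    intro v c
    by_cases hc : c = 0
    · exact Or.inl ⟨fun _ => 0, fun i => le_refl 0, by simp [hc]⟩
    · refine Or.inr ⟨-c, fun i => i.elim0, ?_⟩
      have h := dot_self_pos hc
      have : dot c (-c) = -dot c c := by simp [dot, mul_neg]
      rw [this]; linarith
  | succ k ih =>
    intro v c
    set v' : Fin k → α → ℝ := fun i => v i.castSucc with hv'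
    set vl : α → ℝ := v (Fin.last k) with hvl'
    rcases ih v' c with ⟨t, ht, hc⟩ | ⟨d, hd, hcd⟩
    · left
      refine ⟨Fin.lastCases 0 t, ?_, ?_⟩
      · intro i
        induction i using Fin.lastCases with
        | last => simp
        | cast i => simpa using ht i
      · rw [Fin.sum_univ_castSucc]; simp [hc]; rfl
    · by_cases hdl : 0 ≤ dot vl d
      · refine Or.inr ⟨d, ?_, hcd⟩
        intro i
        induction i using Fin.lastCases with
        | last => exact hdl
        | cast i => exact hd i
      · push_neg at hdl
        have hdl0 : dot vl d ≠ 0 := ne_of_lt hdl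
        set ρ : (α → ℝ) → ℝ := fun x => dot x d / dot vl d with hρ
        set w : Fin k → α → ℝ := fun i => v' i - ρ (v' i) • vl with hw
        set c' : α → ℝ := c - ρ c • vl with hc'
        have hρc : 0 < ρ c := div_pos_of_neg_of_neg hcd hdl
        have hρv : ∀ i, ρ (v' i) ≤ 0 := fun i => div_nonpos_of_nonneg_of_nonpos (hd i) hdl.le
        rcases ih w c' with ⟨t, ht, hct⟩ | ⟨d', hd', hcd'⟩
        · left
          refine ⟨Fin.lastCases (ρ c - ∑ i, t i * ρ (v' i)) t, ?_, ?_⟩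
          · intro i
            induction i using Fin.lastCases with
            | last =>
              simp only [Fin.lastCases_last]
              have hs : ∑ i, t i * ρ (v' i) ≤ 0 :=
                Finset.sum_nonpos fun i _ => mul_nonpos_of_nonneg_of_nonpos (ht i) (hρv i)
              linarith
            | cast i => simpa using ht i
          · rw [Fin.sum_univ_castSucc]
            simp only [Fin.lastCases_castSucc, Fin.lastCases_last]
            have hsum : ∑ i, t i • w i
                = ∑ i, t i • v' i - (∑ i, t i * ρ (v' i)) • vl := by
              rw [Finset.sum_smul]
              rw [← Finset.sum_sub_distrib]
              congr 1; funext i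
              rw [hw]; rw [smul_sub, smul_smul]
            have : c - ρ c • vl = ∑ i, t i • v' i - (∑ i, t i * ρ (v' i)) • vl := by
              rw [← hsum, ← hct, hc']
            funext a
            have h2 := congrFun this a
            simp only [hv', hvl', Pi.add_apply, Pi.sub_apply, Pi.smul_apply, smul_eq_mul,
              Finset.sum_apply] at h2 ⊢
            linarith
        · right
          refine ⟨d' - (dot vl d' / dot vl d) • d, ?_, ?_⟩
          · intro i
            induction i using Fin.lastCases with
            | last =>
              rw [dot_sub_right, dot_smul_right]
              field_simp
              rw [← hvl']; simp
            | cast i =>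
              have h1 := hd' i
              rw [hw] at h1
              rw [dot_sub_left, dot_smul_left] at h1
              rw [dot_sub_right, dot_smul_right]
              rw [hρ] at h1
              have : dot (v' i) d / dot vl d * dot vl d' = dot vl d' / dot vl d * dot (v' i) d := by
                field_simp
              linarith [h1, this]
          · have h1 := hcd'
            rw [hc', dot_sub_left, dot_smul_left] at h1
            rw [dot_sub_right, dot_smul_right]
            have : ρ c * dot vl d' = dot vl d' / dot vl d * dot c d := by
              rw [hρ]; field_simp
            linarith



theorem farkas' {ι : Type*} [Fintype ι] (v : ι → α → ℝ) (c : α → ℝ) :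
    (∃ t : ι → ℝ, (∀ i, 0 ≤ t i) ∧ c = ∑ i, t i • v i) ∨
    (∃ d : α → ℝ, (∀ i, 0 ≤ dot (v i) d) ∧ dot c d < 0) := by
  have e := Fintype.equivFin ι
  rcases farkas (Fintype.card ι) (fun i => v (e.symm i)) c with ⟨t, ht, hc⟩ | ⟨d, hd, hcd⟩
  · left
    refine ⟨fun i => t (e i), fun i => ht _, ?_⟩
    rw [hc, ← Equiv.sum_comp e.symm (fun i => t (e i) • v i)]
    simp
  · right
    exact ⟨d, fun i => by simpa using hd (e i), hcd⟩


end Farkas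

lemma abs_le_linf {m : ℕ} (x : Fin m → ℝ) (i : Fin m) : |x i| ≤ linf x := by
  rw [linf]
  exact le_ciSup (Set.Finite.bddAbove (Set.finite_range fun i => |x i|)) i

lemma linf_le {m : ℕ} {x : Fin m → ℝ} {δ : ℝ} (hδ : 0 ≤ δ) (h : ∀ i, |x i| ≤ δ) :
    linf x ≤ δ := by
  rcases isEmpty_or_nonempty (Fin m) with hm | hm
  · rw [linf, Real.iSup_of_isEmpty]; exact hδ
  · rw [linf]; exact ciSup_le h

lemma abs_sign_le_one (x : ℝ) : |Real.sign x| ≤ 1 := by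
  rcases lt_trichotomy x 0 with h | h | h
  · rw [Real.sign_of_neg h]; norm_num
  · rw [h, Real.sign_zero]; norm_num
  · rw [Real.sign_of_pos h]; norm_num

lemma exists_pos_min {κ : Type*} [Fintype κ] (f : κ → ℝ) (hf : ∀ k, 0 < f k) :
    ∃ t : ℝ, 0 < t ∧ ∀ k, t ≤ f k := by
  rcases isEmpty_or_nonempty κ with hκ | hκ
  · exact ⟨1, one_pos, fun k => (hκ.false k).elim⟩
  · refine ⟨Finset.univ.inf' Finset.univ_nonempty f, ?_, ?_⟩
    · rw [Finset.lt_inf'_iff]; exact fun k _ => hf k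
    · exact fun k => Finset.inf'_le f (Finset.mem_univ k)

lemma sign_mul_self' {x : ℝ} (h : x ≠ 0) : Real.sign x * x = |x| := by
  rcases lt_trichotomy x 0 with h' | h' | h'
  · rw [Real.sign_of_neg h', abs_of_neg h']; ring
  · exact absurd h' h
  · rw [Real.sign_of_pos h', abs_of_pos h']; ring

lemma key_swap {m n : ℕ} (A : Matrix (Fin m) (Fin n) ℝ) (ybar : Fin m → ℝ)
    (u : Fin n → ℝ) :
    ∑ j, (-(A.transpose.mulVec ybar)) j * u j = -∑ i, ybar i * A.mulVec u i := by
  simp only [Pi.neg_apply, Matrix.mulVec, Matrix.transpose_apply, dotProduct,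
    neg_mul, Finset.sum_mul, Finset.mul_sum, ← Finset.sum_neg_distrib]
  rw [Finset.sum_comm]
  apply Finset.sum_congr rfl; intro i _
  apply Finset.sum_congr rfl; intro j _
  ring

lemma backward {m n : ℕ} (A : Matrix (Fin m) (Fin n) ℝ) (xbar : Fin n → ℝ)
    (bhat : Fin m → ℝ) (δ : ℝ) (hδ : 0 ≤ δ) (ybar : Fin m → ℝ) (η : Fin m → ℝ)
    (hη : η ∈ SignSet ybar) (hξ : -(A.transpose.mulVec ybar) ∈ SignSet xbar)
    (hb : bhat = A.mulVec xbar - δ • η) : IsOpt A bhat δ xbar := by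
  obtain ⟨hη1, hη2⟩ := hη
  obtain ⟨hξ1, hξ2⟩ := hξ
  have hwb : ∀ i, A.mulVec xbar i - bhat i = δ * η i := by
    intro i; rw [hb]; simp
  constructor
  · refine linf_le hδ fun i => ?_
    rw [Pi.sub_apply, hwb i, abs_mul, abs_of_nonneg hδ]
    calc δ * |η i| ≤ δ * 1 := mul_le_mul_of_nonneg_left (hη1 i) hδ
    _ = δ := mul_one δ
  · intro z hz
    have hz' : ∀ i, |A.mulVec z i - bhat i| ≤ δ := by
      intro i
      have h1 : |(A.mulVec z - bhat) i| ≤ linf (A.mulVec z - bhat) := abs_le_linf _ i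
      simpa using h1.trans hz
    have e1 : l1 xbar = ∑ j, (-(A.transpose.mulVec ybar)) j * xbar j := by
      rw [l1]; apply Finset.sum_congr rfl; intro j _
      by_cases h : xbar j = 0
      · simp [h]
      · rw [hξ2 j h, sign_mul_self' h]
    have e2 : ∀ i, ybar i * (A.mulVec xbar i - bhat i) = δ * |ybar i| := by
      intro i
      rw [hwb i]
      by_cases h : ybar i = 0
      · simp [h]
      · rw [hη2 i h]
        calc ybar i * (δ * Real.sign (ybar i)) = δ * (Real.sign (ybar i) * ybar i) := by ring
        _ = δ * |ybar i| := by rw [sign_mul_self' h]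
    have c1 : l1 xbar = -∑ i, ybar i * bhat i - δ * ∑ i, |ybar i| := by
      rw [e1, key_swap]
      have h : ∑ i, ybar i * A.mulVec xbar i
          = ∑ i, ybar i * bhat i + δ * ∑ i, |ybar i| := by
        rw [Finset.mul_sum, ← Finset.sum_add_distrib]
        apply Finset.sum_congr rfl; intro i _
        have h2 := e2 i
        nlinarith [h2]
      rw [h]; ring
    have h1 : ∑ j, (-(A.transpose.mulVec ybar)) j * z j ≤ l1 z := by
      rw [l1]; apply Finset.sum_le_sum; intro j _
      calc (-(A.transpose.mulVec ybar)) j * z j ≤ |(-(A.transpose.mulVec ybar)) j * z j| :=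
        le_abs_self _
      _ = |(-(A.transpose.mulVec ybar)) j| * |z j| := abs_mul _ _
      _ ≤ 1 * |z j| := mul_le_mul_of_nonneg_right (hξ1 j) (abs_nonneg _)
      _ = |z j| := one_mul _
    have h2 : ∀ i, ybar i * (A.mulVec z i - bhat i) ≤ δ * |ybar i| := by
      intro i
      calc ybar i * (A.mulVec z i - bhat i) ≤ |ybar i * (A.mulVec z i - bhat i)| := le_abs_self _
      _ = |ybar i| * |A.mulVec z i - bhat i| := abs_mul _ _
      _ ≤ |ybar i| * δ := mul_le_mul_of_nonneg_left (hz' i) (abs_nonneg _)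
      _ = δ * |ybar i| := mul_comm _ _
    have h3 : ∑ i, ybar i * A.mulVec z i ≤ ∑ i, ybar i * bhat i + δ * ∑ i, |ybar i| := by
      rw [Finset.mul_sum, ← Finset.sum_add_distrib]
      apply Finset.sum_le_sum; intro i _
      have := h2 i; nlinarith [this]
    have h4 := key_swap A ybar z
    linarith [c1, h1, h3, h4]


lemma forward {m n : ℕ} (A : Matrix (Fin m) (Fin n) ℝ) (xbar : Fin n → ℝ)
    (bhat : Fin m → ℝ) (δ : ℝ) (hδ : 0 ≤ δ) (hopt : IsOpt A bhat δ xbar) :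
    ∃ ybar : Fin m → ℝ, ∃ η ∈ SignSet ybar,
      -(A.transpose.mulVec ybar) ∈ SignSet xbar ∧ bhat = A.mulVec xbar - δ • η := by
  classical
  set w : Fin m → ℝ := fun i => A.mulVec xbar i - bhat i with hw
  have hfw : ∀ i, |w i| ≤ δ := by
    intro i
    have h1 := abs_le_linf (A.mulVec xbar - bhat) i
    simp only [Pi.sub_apply] at h1
    exact h1.trans hopt.1
  set g : (Fin m ⊕ Fin m) ⊕ (Fin n ⊕ Fin n ⊕ Fin n) → (Fin n ⊕ Fin n) → ℝ :=
    Sum.elim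
      (Sum.elim (fun i => if w i = δ then Sum.elim (fun j => A i j) 0 else 0)
                (fun i => if w i = -δ then Sum.elim (fun j => -A i j) 0 else 0))
      (Sum.elim (fun j => if xbar j = 0 then Sum.elim (Pi.single j 1) (Pi.single j 1) else 0)
        (Sum.elim (fun j => if xbar j = 0 then Sum.elim (-Pi.single j 1) (Pi.single j 1) else 0)
                  (fun j => if xbar j = 0 then Sum.elim 0 (Pi.single j 1) else 0))) with hg
  set c : (Fin n ⊕ Fin n) → ℝ :=
    Sum.elim (fun j => if xbar j = 0 then 0 else -Real.sign (xbar j))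
             (fun j => if xbar j = 0 then 1 else 0) with hc
  rcases farkas' g c with ⟨t, ht, hct⟩ | ⟨d, hd, hcd⟩
  · -- extract certificate
    set lam : Fin m → ℝ := fun i => t (.inl (.inl i)) with hlam
    set mu : Fin m → ℝ := fun i => t (.inl (.inr i)) with hmu
    set aa : Fin n → ℝ := fun j => t (.inr (.inl j)) with haa
    set bb : Fin n → ℝ := fun j => t (.inr (.inr (.inl j))) with hbb
    set tt : Fin n → ℝ := fun j => t (.inr (.inr (.inr j))) with htt
    set ybar : Fin m → ℝ :=
      fun i => (if w i = δ then lam i else 0) - (if w i = -δ then mu i else 0) with hybar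
    -- coordinate equations
    have hsum : ∀ x, c x = ∑ i, t i * g i x := by
      intro x
      rw [hct]
      simp [Finset.sum_apply]
    have eqL : ∀ j : Fin n,
        c (.inl j) = (∑ i, A i j * ybar i) + (if xbar j = 0 then aa j - bb j else 0) := by
      intro j
      rw [hsum (.inl j)]
      rw [Fintype.sum_sum_type, Fintype.sum_sum_type, Fintype.sum_sum_type,
        Fintype.sum_sum_type]
      have e1 : ∀ i : Fin m, t (Sum.inl (Sum.inl i)) * g (.inl (.inl i)) (.inl j)
          = (if w i = δ then lam i else 0) * A i j := by
        intro i; by_cases h : w i = δ <;> simp [hg, h, hlam]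
      have e2 : ∀ i : Fin m, t (Sum.inl (Sum.inr i)) * g (.inl (.inr i)) (.inl j)
          = -((if w i = -δ then mu i else 0) * A i j) := by
        intro i; by_cases h : w i = -δ <;> simp [hg, h, hmu]
      have e3 : ∑ j' : Fin n, t (Sum.inr (Sum.inl j')) * g (.inr (.inl j')) (.inl j)
          = if xbar j = 0 then aa j else 0 := by
        rw [Finset.sum_eq_single j]
        · by_cases h : xbar j = 0 <;> simp [hg, h, haa]
        · intro j' _ hj'
          by_cases h : xbar j' = 0 <;> simp [hg, h, Pi.single_apply, Ne.symm hj', hj']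
        · simp
      have e4 : ∑ j' : Fin n, t (Sum.inr (Sum.inr (Sum.inl j'))) * g (.inr (.inr (.inl j'))) (.inl j)
          = if xbar j = 0 then -bb j else 0 := by
        rw [Finset.sum_eq_single j]
        · by_cases h : xbar j = 0 <;> simp [hg, h, hbb]
        · intro j' _ hj'
          by_cases h : xbar j' = 0 <;> simp [hg, h, Pi.single_apply, Ne.symm hj', hj']
        · simp
      have e5 : ∀ j' : Fin n, t (Sum.inr (Sum.inr (Sum.inr j'))) * g (.inr (.inr (.inr j'))) (.inl j)
          = 0 := by
        intro j'; by_cases h : xbar j' = 0 <;> simp [hg, h]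
      rw [Finset.sum_congr rfl (fun i _ => e1 i), Finset.sum_congr rfl (fun i _ => e2 i),
        e3, e4, Finset.sum_congr rfl (fun i _ => e5 i)]
      have hy : ∑ i, A i j * ybar i
          = ∑ i, (if w i = δ then lam i else 0) * A i j
            + ∑ i, -((if w i = -δ then mu i else 0) * A i j) := by
        rw [← Finset.sum_add_distrib]
        apply Finset.sum_congr rfl; intro i _
        rw [hybar]; ring
      rw [hy]
      by_cases h : xbar j = 0 <;> simp [h] <;> ring
    have eqR : ∀ j : Fin n, xbar j = 0 → aa j + bb j + tt j = 1 := by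
      intro j hj
      have h := hsum (.inr j)
      rw [Fintype.sum_sum_type, Fintype.sum_sum_type, Fintype.sum_sum_type,
        Fintype.sum_sum_type] at h
      have e1 : ∀ i : Fin m, t (Sum.inl (Sum.inl i)) * g (.inl (.inl i)) (.inr j) = 0 := by
        intro i; by_cases hh : w i = δ <;> simp [hg, hh]
      have e2 : ∀ i : Fin m, t (Sum.inl (Sum.inr i)) * g (.inl (.inr i)) (.inr j) = 0 := by
        intro i; by_cases hh : w i = -δ <;> simp [hg, hh]
      have e3 : ∑ j' : Fin n, t (Sum.inr (Sum.inl j')) * g (.inr (.inl j')) (.inr j)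
          = if xbar j = 0 then aa j else 0 := by
        rw [Finset.sum_eq_single j]
        · by_cases hh : xbar j = 0 <;> simp [hg, hh, haa]
        · intro j' _ hj'
          by_cases hh : xbar j' = 0 <;> simp [hg, hh, Pi.single_apply, Ne.symm hj', hj']
        · simp
      have e4 : ∑ j' : Fin n, t (Sum.inr (Sum.inr (Sum.inl j'))) * g (.inr (.inr (.inl j'))) (.inr j)
          = if xbar j = 0 then bb j else 0 := by
        rw [Finset.sum_eq_single j]
        · by_cases hh : xbar j = 0 <;> simp [hg, hh, hbb]
        · intro j' _ hj'
          by_cases hh : xbar j' = 0 <;> simp [hg, hh, Pi.single_apply, Ne.symm hj', hj']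
        · simp
      have e5 : ∑ j' : Fin n, t (Sum.inr (Sum.inr (Sum.inr j'))) * g (.inr (.inr (.inr j'))) (.inr j)
          = if xbar j = 0 then tt j else 0 := by
        rw [Finset.sum_eq_single j]
        · by_cases hh : xbar j = 0 <;> simp [hg, hh, htt]
        · intro j' _ hj'
          by_cases hh : xbar j' = 0 <;> simp [hg, hh, Pi.single_apply, Ne.symm hj', hj']
        · simp
      rw [Finset.sum_congr rfl (fun i _ => e1 i), Finset.sum_congr rfl (fun i _ => e2 i),
        e3, e4, e5, hj] at h
      simp [hc, hj] at h
      linarith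
    -- the transpose product
    have hAty : ∀ j, A.transpose.mulVec ybar j = ∑ i, A i j * ybar i := by
      intro j
      simp [Matrix.mulVec, dotProduct, Matrix.transpose_apply]
    have hxi : ∀ j, (-(A.transpose.mulVec ybar)) j
        = (if xbar j = 0 then aa j - bb j else 0) - c (.inl j) := by
      intro j
      rw [Pi.neg_apply, hAty j]
      have := eqL j
      linarith
    refine ⟨ybar, fun i => if δ = 0 then Real.sign (ybar i) else w i / δ, ⟨?_, ?_⟩, ⟨?_, ?_⟩, ?_⟩
    · -- |η i| ≤ 1
      intro i
      by_cases h : δ = 0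
      · simp only [h, if_pos]
        exact abs_sign_le_one _
      · have hδ' : 0 < δ := lt_of_le_of_ne hδ (Ne.symm h)
        simp only [h, if_neg, if_false]
        rw [abs_div, abs_of_pos hδ', div_le_one hδ']
        exact hfw i
    · -- sign condition for η
      intro i hi
      by_cases h : δ = 0
      · simp [h]
      · have hδ' : 0 < δ := lt_of_le_of_ne hδ (Ne.symm h)
        simp only [h, if_neg, if_false]
        rcases lt_trichotomy (ybar i) 0 with hy | hy | hy
        · have h2 : (if w i = -δ then mu i else 0) > 0 := by
            by_contra hcon
            push_neg at hcon
            have h3 : 0 ≤ (if w i = δ then lam i else 0) := by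
              by_cases hh : w i = δ <;> simp [hh, ht, hlam]
            rw [hybar] at hy
            simp only at hy
            linarith
          have h4 : w i = -δ := by
            by_contra hcon; simp [hcon] at h2
          rw [h4, Real.sign_of_neg hy]
          field_simp
        · exact absurd hy hi
        · have h2 : (if w i = δ then lam i else 0) > 0 := by
            by_contra hcon
            push_neg at hcon
            have h3 : 0 ≤ (if w i = -δ then mu i else 0) := by
              by_cases hh : w i = -δ <;> simp [hh, ht, hmu]
            rw [hybar] at hy
            simp only at hy
            linarith
          have h4 : w i = δ := by
            by_contra hcon; simp [hcon] at h2
          rw [h4, Real.sign_of_pos hy]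
          field_simp
    · -- |ξ j| ≤ 1
      intro j
      rw [hxi j]
      by_cases h : xbar j = 0
      · simp only [h, if_pos, hc, Sum.elim_inl, if_pos]
        have h1 := eqR j h
        have h2 : 0 ≤ aa j := ht _
        have h3 : 0 ≤ bb j := ht _
        have h4 : 0 ≤ tt j := ht _
        rw [abs_le]
        constructor <;> simp <;> linarith
      · rw [if_neg h]
        have hcj : c (.inl j) = -Real.sign (xbar j) := by simp [hc, h]
        rw [hcj, zero_sub, neg_neg]
        exact abs_sign_le_one _
    · -- ξ j = sign
      intro j hj
      rw [hxi j]
      simp [hc, hj]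
    · -- bhat = A.mulVec xbar - δ • η
      funext i
      simp only [Pi.sub_apply, Pi.smul_apply, smul_eq_mul]
      by_cases h : δ = 0
      · have h1 : |w i| ≤ 0 := h ▸ hfw i
        have h2 : w i = 0 := abs_nonpos_iff.mp h1
        have h3 : A.mulVec xbar i - bhat i = 0 := h2
        simp [h]
        linarith
      · simp only [h, if_neg, if_false]
        have h3 : A.mulVec xbar i - bhat i = w i := rfl
        field_simp
        linarith [h3]
  · -- contradiction with optimality
    exfalso
    set d1 : Fin n → ℝ := fun j => d (.inl j) with hd1
    set d2 : Fin n → ℝ := fun j => d (.inr j) with hd2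
    have hdot : ∀ v1 v2 : Fin n → ℝ,
        dot (Sum.elim v1 v2) d = ∑ j, v1 j * d1 j + ∑ j, v2 j * d2 j := by
      intro v1 v2
      rw [dot, Fintype.sum_sum_type]
      simp [hd1, hd2]
    have hplus : ∀ i, w i = δ → 0 ≤ ∑ j, A i j * d1 j := by
      intro i hi
      have h := hd (.inl (.inl i))
      rw [hg] at h
      simp only [Sum.elim_inl] at h
      rw [if_pos hi, hdot] at h
      simpa using h
    have hminus : ∀ i, w i = -δ → ∑ j, A i j * d1 j ≤ 0 := by
      intro i hi
      have h := hd (.inl (.inr i))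
      rw [hg] at h
      simp only [Sum.elim_inl, Sum.elim_inr] at h
      rw [if_pos hi, hdot] at h
      simp only [neg_mul, Finset.sum_neg_distrib] at h
      simpa using h
    have hsingle : ∀ (j : Fin n) (v : Fin n → ℝ), ∑ j', (Pi.single j 1 : Fin n → ℝ) j' * v j' = v j := by
      intro j v
      rw [Finset.sum_eq_single j]
      · simp
      · intro j' _ hj'; simp [Pi.single_apply, hj']
      · simp
    have hnsingle : ∀ (j : Fin n) (v : Fin n → ℝ),
        ∑ j', (-(Pi.single j 1 : Fin n → ℝ)) j' * v j' = -v j := by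
      intro j v
      simp only [Pi.neg_apply, neg_mul, Finset.sum_neg_distrib]
      rw [hsingle]
    have hzsingle : ∀ (v : Fin n → ℝ), ∑ j', (0 : Fin n → ℝ) j' * v j' = 0 := by
      intro v; simp
    have hP : ∀ j, xbar j = 0 → 0 ≤ d1 j + d2 j := by
      intro j hj
      have h := hd (.inr (.inl j))
      rw [hg] at h
      simp only [Sum.elim_inl, Sum.elim_inr] at h
      rw [if_pos hj, hdot, hsingle, hsingle] at h
      exact h
    have hQ : ∀ j, xbar j = 0 → 0 ≤ -d1 j + d2 j := by
      intro j hj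
      have h := hd (.inr (.inr (.inl j)))
      rw [hg] at h
      simp only [Sum.elim_inl, Sum.elim_inr] at h
      rw [if_pos hj, hdot, hnsingle, hsingle] at h
      linarith
    have hR : ∀ j, xbar j = 0 → 0 ≤ d2 j := by
      intro j hj
      have h := hd (.inr (.inr (.inr j)))
      rw [hg] at h
      simp only [Sum.elim_inl, Sum.elim_inr] at h
      rw [if_pos hj, hdot, hzsingle, hsingle] at h
      linarith
    have habs : ∀ j, xbar j = 0 → |d1 j| ≤ d2 j := by
      intro j hj
      rw [abs_le]
      constructor
      · linarith [hP j hj]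
      · linarith [hQ j hj]
    have hcsum : ∑ j, (if xbar j = 0 then d2 j else -Real.sign (xbar j) * d1 j) < 0 := by
      have h : dot c d < 0 := hcd
      rw [hc, hdot] at h
      have he2 : ∑ j, (if xbar j = 0 then (0:ℝ) else -Real.sign (xbar j)) * d1 j
          + ∑ j, (if xbar j = 0 then (1:ℝ) else 0) * d2 j
          = ∑ j, (if xbar j = 0 then d2 j else -Real.sign (xbar j) * d1 j) := by
        rw [← Finset.sum_add_distrib]
        apply Finset.sum_congr rfl; intro j _
        by_cases hj : xbar j = 0 <;> simp [hj]
      linarith [he2]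
    set e : Fin n → ℝ := fun j => -d1 j with he'
    have hAe : ∀ i, A.mulVec e i = -∑ j, A i j * d1 j := by
      intro i
      simp [Matrix.mulVec, dotProduct, he', mul_neg, Finset.sum_neg_distrib]
    obtain ⟨tstep, ht0, htle⟩ := exists_pos_min
      (Sum.elim
        (fun i => if A.mulVec e i = 0 then 1
          else (δ - |w i| + (if |w i| = δ then 2*δ else 0)) / |A.mulVec e i|)
        (fun j => if xbar j = 0 then 1 else |xbar j| / (|d1 j| + 1)))
      (by
        rintro (i | j)
        · simp only [Sum.elim_inl]
          by_cases hu : A.mulVec e i = 0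
          · simp [hu]
          · rw [if_neg hu]
            apply div_pos
            · by_cases hwd : |w i| = δ
              · rw [if_pos hwd]
                have hδpos : 0 < δ := by
                  rcases lt_or_eq_of_le hδ with h' | h'
                  · exact h'
                  · exfalso
                    have hw0 : w i = 0 := by
                      have h1 := hfw i
                      rw [← h'] at h1
                      exact abs_nonpos_iff.mp h1
                    have h1 : 0 ≤ ∑ j, A i j * d1 j := hplus i (by rw [hw0, ← h'])
                    have h2 : ∑ j, A i j * d1 j ≤ 0 := by
                      apply hminus i
                      rw [hw0, ← h']
                      ring
                    apply hu
                    rw [hAe i]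
                    have h3 : ∑ j, A i j * d1 j = 0 := le_antisymm h2 h1
                    rw [h3]; ring
                linarith
              · rw [if_neg hwd]
                have h1 := lt_of_le_of_ne (hfw i) hwd
                linarith
            · exact abs_pos.mpr hu
        · simp only [Sum.elim_inr]
          by_cases hj : xbar j = 0
          · simp [hj]
          · rw [if_neg hj]
            apply div_pos (abs_pos.mpr hj)
            positivity)
    set z : Fin n → ℝ := fun j => xbar j + tstep * e j with hz
    have hAz : ∀ i, A.mulVec z i - bhat i = w i + tstep * A.mulVec e i := by
      intro i
      have hz2 : z = xbar + tstep • e := by funext j; simp [hz]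
      rw [hz2, Matrix.mulVec_add, Matrix.mulVec_smul]
      simp only [Pi.add_apply, Pi.smul_apply, smul_eq_mul, hw]
      ring
    have hfeas : Feas A bhat δ z := by
      refine linf_le hδ fun i => ?_
      have h1 : (A.mulVec z - bhat) i = w i + tstep * A.mulVec e i := by
        simp only [Pi.sub_apply]; exact hAz i
      rw [h1]
      by_cases hu : A.mulVec e i = 0
      · rw [hu]; simpa using hfw i
      · have h2 : tstep * |A.mulVec e i| ≤ δ - |w i| + (if |w i| = δ then 2*δ else 0) := by
          have h3 := htle (.inl i)
          simp only [Sum.elim_inl, if_neg hu] at h3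
          rw [le_div_iff₀ (abs_pos.mpr hu)] at h3
          linarith [h3]
        by_cases hwd : |w i| = δ
        · rw [if_pos hwd, hwd] at h2
          rcases (abs_eq hδ).mp hwd with hwi | hwi
          · have hu2 : A.mulVec e i ≤ 0 := by
              rw [hAe i]; linarith [hplus i hwi]
            have h4 : tstep * A.mulVec e i ≤ 0 :=
              mul_nonpos_of_nonneg_of_nonpos ht0.le hu2
            have h5 : |A.mulVec e i| = -(A.mulVec e i) := abs_of_nonpos hu2
            rw [h5] at h2
            have h6 : tstep * -(A.mulVec e i) = -(tstep * A.mulVec e i) := by ring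
            rw [h6] at h2
            rw [abs_le]
            constructor
            · rw [hwi]; linarith
            · rw [hwi]; linarith
          · have hu2 : 0 ≤ A.mulVec e i := by
              rw [hAe i]; linarith [hminus i hwi]
            have h4 : 0 ≤ tstep * A.mulVec e i := mul_nonneg ht0.le hu2
            have h5 : |A.mulVec e i| = A.mulVec e i := abs_of_nonneg hu2
            rw [h5] at h2
            rw [abs_le]
            constructor
            · rw [hwi]; linarith
            · rw [hwi]; linarith
        · rw [if_neg hwd] at h2
          calc |w i + tstep * A.mulVec e i| ≤ |w i| + |tstep * A.mulVec e i| := abs_add_le _ _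
          _ = |w i| + tstep * |A.mulVec e i| := by rw [abs_mul, abs_of_pos ht0]
          _ ≤ |w i| + (δ - |w i| + 0) := by linarith
          _ = δ := by ring
    have hterm : ∀ j, |z j|
        ≤ |xbar j| + tstep * (if xbar j = 0 then d2 j else -Real.sign (xbar j) * d1 j) := by
      intro j
      have hzj : z j = xbar j - tstep * d1 j := by simp [hz, he']; ring
      by_cases hj : xbar j = 0
      · rw [if_pos hj, hzj, hj]
        simp only [zero_sub, abs_neg, abs_zero, zero_add, abs_mul, abs_of_pos ht0]
        exact mul_le_mul_of_nonneg_left (habs j hj) ht0.le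
      · rw [if_neg hj]
        have hG2 : tstep ≤ |xbar j| / (|d1 j| + 1) := by
          have h3 := htle (.inr j)
          simpa [hj] using h3
        have hG3 : tstep * (|d1 j| + 1) ≤ |xbar j| := by
          rw [le_div_iff₀ (by positivity)] at hG2
          exact hG2
        have htd : tstep * |d1 j| < |xbar j| := by nlinarith [ht0]
        have habs1 : tstep * d1 j ≤ tstep * |d1 j| :=
          mul_le_mul_of_nonneg_left (le_abs_self _) ht0.le
        have habs2 : -(tstep * |d1 j|) ≤ tstep * d1 j := by
          have := mul_le_mul_of_nonneg_left (neg_abs_le (d1 j)) ht0.le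
          linarith [this]
        rcases lt_trichotomy (xbar j) 0 with hx | hx | hx
        · rw [Real.sign_of_neg hx, hzj]
          have h1 : z j < 0 := by rw [hzj]; rw [abs_of_neg hx] at htd; linarith
          rw [hzj] at h1
          rw [abs_of_neg (by linarith : xbar j - tstep * d1 j < 0), abs_of_neg hx]
          ring_nf
          linarith
        · exact absurd hx hj
        · rw [Real.sign_of_pos hx, hzj]
          have h1 : 0 < xbar j - tstep * d1 j := by
            rw [abs_of_pos hx] at htd; linarith
          rw [abs_of_pos h1, abs_of_pos hx]
          ring_nf
          linarith
    have hl1 : l1 z ≤ l1 xbar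
        + tstep * ∑ j, (if xbar j = 0 then d2 j else -Real.sign (xbar j) * d1 j) := by
      rw [l1, l1, Finset.mul_sum, ← Finset.sum_add_distrib]
      exact Finset.sum_le_sum fun j _ => hterm j
    have hneg : tstep * ∑ j, (if xbar j = 0 then d2 j else -Real.sign (xbar j) * d1 j) < 0 :=
      mul_neg_of_pos_of_neg ht0 hcsum
    have hlt : l1 z < l1 xbar := by linarith
    exact absurd (hopt.2 z hfeas) (not_le.mpr hlt)


theorem bp_solution_optimal_iff {m n : ℕ} (A : Matrix (Fin m) (Fin n) ℝ)
    (xbar : Fin n → ℝ) (bhat : Fin m → ℝ) (δ : ℝ) (hδ : 0 ≤ δ)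
    (hBP : ∀ z : Fin n → ℝ, A.mulVec z = A.mulVec xbar → l1 xbar ≤ l1 z) :
    IsOpt A bhat δ xbar ↔
      ∃ ybar : Fin m → ℝ, ∃ η ∈ SignSet ybar,
        -(A.transpose.mulVec ybar) ∈ SignSet xbar ∧
        bhat = A.mulVec xbar - δ • η := by 
  constructor
  · intro hopt
    exact forward A xbar bhat δ hδ hopt
  · rintro ⟨ybar, η, hη, hξ, hb⟩
    exact backward A xbar bhat δ hδ ybar η hη hξ hb
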